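/- For any functions d, e : X × X → [0,∞], the formal-ball lift satisfies (d∘e)₊ = d₊ ∘ e₊ exactly: for all (x,r),(y,s) ∈ X × [0,∞), inf_{(z,t) ∈ X×[0,∞)} [(d(x,z)−r+t)₊ + (e(z,y)−t+s)₊] = ((d∘e)(x,y) − r + s)₊, where (d∘e)(x,y) = inf_z (d(x,z)+e(z,y)) and r₊ = max(r,0). -/

import Mathlib

open ENNReal NNReal Filter Set

/-- Subtracting a finite constant commutes with infima in `ℝ≥0∞`. -/
lemma iInf_tsub_const {ι : Sort*} (f : ι → ℝ≥0∞) (c : ℝ≥0∞) (hc : c ≠ ∞) :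
    ⨅ i, (f i - c) = (⨅ i, f i) - c := by
  by_cases h : ∀ i, c ≤ f i
  · refine (ENNReal.eq_sub_of_add_eq hc ?_).symm.symm
    rw [ENNReal.iInf_add]
    exact iInf_congr fun i => tsub_add_cancel_of_le (h i)
  · push_neg at h
    obtain ⟨i, hi⟩ := h
    have h1 : (⨅ i, f i) - c = 0 := tsub_eq_zero_of_le ((iInf_le f i).trans hi.le)
    have h2 : ⨅ j, (f j - c) = 0 :=
      le_antisymm ((iInf_le _ i).trans_eq (tsub_eq_zero_of_le hi.le)) zero_le
    rw [h1, h2]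

/-- The inner infimum over the intermediate radius `t`. -/
lemma iInf_inner (a b : ℝ≥0∞) (r : ℝ≥0) :
    ⨅ t : ℝ≥0, ((a + (t : ℝ≥0∞)) - (r : ℝ≥0∞) + (b - (t : ℝ≥0∞))) = (a + b) - r := by
  apply le_antisymm
  · by_cases hra : (r : ℝ≥0∞) ≤ a
    · refine (iInf_le _ 0).trans (le_of_eq ?_)
      rw [ENNReal.coe_zero, add_zero, tsub_zero]
      refine ENNReal.eq_sub_of_add_eq coe_ne_top ?_
      rw [add_right_comm, tsub_add_cancel_of_le hra]
    · push_neg at hra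
      have ha : a ≠ ∞ := (hra.trans (coe_lt_top)).ne
      set t : ℝ≥0 := r - a.toNNReal with ht
      have hat : a + (t : ℝ≥0∞) = r := by
        rw [ht, ENNReal.coe_sub, ENNReal.coe_toNNReal ha]
        exact add_tsub_cancel_of_le hra.le
      refine (iInf_le _ t).trans (le_of_eq ?_)
      rw [hat, tsub_self, zero_add, ← hat, ← tsub_tsub,
        ENNReal.add_sub_cancel_left ha]
  · refine le_iInf fun t => ?_
    calc (a + b) - r ≤ (a + (t : ℝ≥0∞) + b) - ((r : ℝ≥0∞) + t) := by
          rw [add_comm (r : ℝ≥0∞) (t : ℝ≥0∞), ← tsub_tsub, add_right_comm,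
            ENNReal.add_sub_cancel_right coe_ne_top]
      _ ≤ (a + (t : ℝ≥0∞)) - r + (b - (t : ℝ≥0∞)) := by
          rw [tsub_le_iff_right]
          calc a + (t : ℝ≥0∞) + b
              ≤ ((a + t) - r + r) + ((b - t) + t) := by
                exact add_le_add le_tsub_add le_tsub_add
            _ = (a + (t : ℝ≥0∞)) - r + (b - (t : ℝ≥0∞)) + ((r : ℝ≥0∞) + t) := by ring

/-- The formal-ball lift preserves composition exactly: `(d∘e)₊ = d₊ ∘ e₊`.
Here `d₊((x,r),(y,s)) = (d x y + s) - r` in `ℝ≥0∞` (truncated subtraction, which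
agrees with `(d(x,y) − r + s)₊`), and `(d∘e)(x,y) = ⨅ z, d x z + e z y`. -/
theorem formalBall_comp {X : Type*} (d e : X → X → ℝ≥0∞) (x y : X) (r s : ℝ≥0) :
    (⨅ p : X × ℝ≥0, (((d x p.1 + (p.2 : ℝ≥0∞)) - (r : ℝ≥0∞)) +
        ((e p.1 y + (s : ℝ≥0∞)) - (p.2 : ℝ≥0∞)))) =
      ((⨅ z : X, d x z + e z y) + (s : ℝ≥0∞)) - (r : ℝ≥0∞) := by
  rw [iInf_prod, ENNReal.iInf_add, ← iInf_tsub_const _ _ coe_ne_top]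
  refine iInf_congr fun z => ?_
  simpa [add_assoc] using iInf_inner (d x z) (e z y + s) r
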